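/- Let λ > 0, Δt ∈ (0, 1/e) and for each n with t_n = nΔt < 1 define m_n as the smallest nonnegative integer m with log Γ(2m+1) ≥ (3/2)|log Δt| + ((2m−1)/2)·log((16/λ)|log Δt|) + (m−2)|log(1−t_n)|. Then m_n ≤ 1 + max{ (3/4)|log Δt|, (e²/2)·sqrt(16|log Δt|/(λ(1−t_n))) }. -/

import Mathlib

/-- A crude Stirling-type lower bound: `log n! ≥ (n-1) log n - n + 2` for `n ≥ 2`. -/
theorem log_factorial_lb (n : ℕ) (hn : 2 ≤ n) :
    ((n : ℝ) - 1) * Real.log n - n + 2 ≤ Real.log (n.factorial) := by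
  induction n, hn using Nat.le_induction with
  | base =>
    norm_num [Nat.factorial]
  | succ n hn ih =>
    have hn0 : (0:ℝ) < n := by positivity
    have hfacpos : (0:ℝ) < (n.factorial : ℝ) := by exact_mod_cast n.factorial_pos
    have hlog : Real.log ((n+1).factorial) = Real.log (n+1) + Real.log (n.factorial) := by
      rw [Nat.factorial_succ]
      push_cast
      rw [Real.log_mul (by positivity) (by positivity)]
    have hratio : Real.log ((n:ℝ)+1) - Real.log n ≤ 1 / n := by
      have h1 : Real.log (((n:ℝ)+1)/n) ≤ ((n:ℝ)+1)/n - 1 :=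
        Real.log_le_sub_one_of_pos (by positivity)
      rw [Real.log_div (by positivity) (by positivity)] at h1
      have : ((n:ℝ)+1)/n - 1 = 1/n := by field_simp; ring
      linarith [this ▸ h1]
    have hn2 : (2:ℝ) ≤ n := by exact_mod_cast hn
    -- (n-1)·(log(n+1) - log n) ≤ (n-1)/n ≤ 1
    have hmul : ((n:ℝ) - 1) * (Real.log ((n:ℝ)+1) - Real.log n) ≤ ((n:ℝ)-1) * (1/n) :=
      mul_le_mul_of_nonneg_left hratio (by linarith)
    have hfrac : ((n:ℝ)-1) * (1/n) ≤ 1 := by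
      rw [mul_one_div, div_le_one hn0]; linarith
    rw [hlog]
    push_cast
    nlinarith [ih]

/-- Bound on the number of Gauss points chosen via the criterion
`log Γ(2m+1) ≥ M₁(m, Δt, n)`. -/
theorem gauss_point_count_bound
    (lam dt : ℝ) (hlam : 0 < lam) (hdt : 0 < dt) (hdt1 : dt < 1 / Real.exp 1)
    (t : ℝ) (ht0 : 0 ≤ t) (ht : t < 1)
    (m : ℕ)
    (hsat : Real.log (Real.Gamma (2 * m + 1)) ≥
      (3 / 2) * |Real.log dt|
      + ((2 * (m : ℝ) - 1) / 2) * Real.log ((16 / lam) * |Real.log dt|)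
      + ((m : ℝ) - 2) * |Real.log (1 - t)|)
    (hmin : ∀ k : ℕ, k < m →
      ¬ (Real.log (Real.Gamma (2 * k + 1)) ≥
        (3 / 2) * |Real.log dt|
        + ((2 * (k : ℝ) - 1) / 2) * Real.log ((16 / lam) * |Real.log dt|)
        + ((k : ℝ) - 2) * |Real.log (1 - t)|)) :
    (m : ℝ) ≤ 1 + max ((3 / 4) * |Real.log dt|)
      ((Real.exp 2 / 2) * Real.sqrt (16 * |Real.log dt| / (lam * (1 - t)))) := by
  set L := |Real.log dt| with hLdef
  set s := |Real.log (1 - t)| with hsdef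
  have h1t : 0 < 1 - t := by linarith
  have hL1 : 1 < L := by
    have hlt : Real.log dt < Real.log (1 / Real.exp 1) := Real.log_lt_log hdt hdt1
    rw [one_div, Real.log_inv, Real.log_exp] at hlt
    calc (1:ℝ) < -Real.log dt := by linarith
      _ ≤ |Real.log dt| := neg_le_abs _
  by_contra hcon
  push_neg at hcon
  -- m ≥ 1
  have hmax0 : 0 ≤ max ((3/4) * L) ((Real.exp 2 / 2) * Real.sqrt (16 * L / (lam * (1 - t)))) :=
    le_max_of_le_left (by positivity)
  have hm1 : m ≠ 0 := by
    rintro rfl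
    simp only [Nat.cast_zero] at hcon
    linarith
  obtain ⟨k, rfl⟩ := Nat.exists_eq_succ_of_ne_zero hm1
  have hk : (max ((3/4) * L) ((Real.exp 2 / 2) * Real.sqrt (16 * L / (lam * (1 - t))))) < k := by
    push_cast at hcon ⊢
    linarith
  have hA : (3/4) * L < k := lt_of_le_of_lt (le_max_left _ _) hk
  have hB : (Real.exp 2 / 2) * Real.sqrt (16 * L / (lam * (1 - t))) < k :=
    lt_of_le_of_lt (le_max_right _ _) hk
  have h34 : (3:ℝ)/4 < k := by nlinarith
  have hk0 : k ≠ 0 := by rintro rfl; norm_num at h34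
  have hk1 : (1:ℝ) ≤ k := by exact_mod_cast Nat.one_le_iff_ne_zero.mpr hk0
  -- the quantity under the sqrt
  set X := 16 * L / (lam * (1 - t)) with hXdef
  have hXpos : 0 < X := by
    have : 0 < L := by linarith
    positivity
  have hs0 : 0 ≤ s := abs_nonneg _
  have hsval : s = -Real.log (1 - t) := by
    rw [hsdef, abs_of_nonpos (Real.log_nonpos (by linarith) (by linarith))]
  have h16L : 0 < (16 / lam) * L := by
    have : 0 < L := by linarith
    positivity
  have hCX : Real.log ((16 / lam) * L) = Real.log X - s := by
    have hXeq : X = ((16 / lam) * L) / (1 - t) := by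
      rw [hXdef]; field_simp
    rw [hXeq, Real.log_div (ne_of_gt h16L) (ne_of_gt h1t), hsval]
    ring
  -- from k > B : log X < 2 log (2k) - 4
  have hexp2 : (0:ℝ) < Real.exp 2 := Real.exp_pos 2
  have hsqrt : Real.sqrt X < 2 * k / Real.exp 2 := by
    rw [lt_div_iff₀ hexp2]
    nlinarith
  have hXlt : X < (2 * (k:ℝ) / Real.exp 2) ^ 2 := by
    nlinarith [Real.sq_sqrt hXpos.le, Real.sqrt_nonneg X]
  have h2k : (0:ℝ) < 2 * k := by linarith
  have hlogX : Real.log X < 2 * Real.log (2 * k) - 4 := by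
    have h1 : Real.log X < Real.log ((2 * (k:ℝ) / Real.exp 2) ^ 2) :=
      Real.log_lt_log hXpos hXlt
    rw [Real.log_pow, Real.log_div (ne_of_gt h2k) (ne_of_gt hexp2), Real.log_exp] at h1
    push_cast at h1
    linarith
  -- log Γ(2k+1) = log (2k)!
  have hGamma : Real.log (Real.Gamma (2 * (k:ℝ) + 1)) = Real.log ((2 * k).factorial) := by
    have h : (2 * (k:ℝ) + 1) = ((2 * k : ℕ) : ℝ) + 1 := by push_cast; ring
    rw [h, Real.Gamma_nat_eq_factorial]
  have hfac := log_factorial_lb (2 * k) (by omega)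
  have hcast : ((2 * k : ℕ) : ℝ) = 2 * (k:ℝ) := by push_cast; ring
  rw [hcast] at hfac
  -- criterion holds at k, contradicting minimality
  refine hmin k (Nat.lt_succ_self k) ?_
  rw [hGamma, hCX]
  have hmul : ((2 * (k:ℝ) - 1) / 2) * Real.log X ≤
      ((2 * (k:ℝ) - 1) / 2) * (2 * Real.log (2 * (k:ℝ)) - 4) :=
    mul_le_mul_of_nonneg_left hlogX.le (by linarith)
  have hexpand : ((2 * (k:ℝ) - 1) / 2) * (2 * Real.log (2 * (k:ℝ)) - 4)
      = (2 * (k:ℝ) - 1) * Real.log (2 * (k:ℝ)) - (4 * (k:ℝ) - 2) := by ring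
  have hfin : (3/2) * L + ((2 * (k:ℝ) - 1) / 2) * Real.log X - (3/2) * s
      ≤ Real.log ((2 * k).factorial) := by
    rw [hexpand] at hmul
    linarith [hfac, hmul, hA, hs0]
  linarith [hfin]
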